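/- Let G be a simple graph with n ≥ 1 vertices and S ⊆ V(G) with |S| = σ, and let λ_1, …, λ_n be the eigenvalues of A(G_S). Then ℳ_3(G_S) = ∑_{i=1}^n |λ_i − σ/n|³ equals 2·∑_{i : λ_i ≥ σ/n} λ_i³ − (6σ/n)·∑_{i : λ_i ≥ σ/n} λ_i² + (4σ²/n²)·∑_{i : λ_i ≥ σ/n} λ_i − Tr(A(G_S)^3) + (3σ/n)·Tr(A(G_S)^2) − 2σ³/n² + (σ²/n²)·E(G_S), where the filtered sums range over those indices i with λ_i ≥ σ/n. -/

import Mathlib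

open Finset Matrix BigOperators

lemma my_conj_pow {n : Type*} [Fintype n] [DecidableEq n] (U D : Matrix n n ℝ)
    (h : star U * U = 1) (h' : U * star U = 1) (k : ℕ) :
    (U * D * star U) ^ k = U * D ^ k * star U := by
  induction k with
  | zero => simpa using h'.symm
  | succ m ih =>
    rw [pow_succ, ih, pow_succ]
    simp only [Matrix.mul_assoc]
    rw [← Matrix.mul_assoc (star U) U, h, Matrix.one_mul]

lemma my_trace_pow_eq_sum {n : Type*} [Fintype n] [DecidableEq n] {A : Matrix n n ℝ}
    (hA : A.IsHermitian) (k : ℕ) : (A ^ k).trace = ∑ i, hA.eigenvalues i ^ k := by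
  have hU : (hA.eigenvectorUnitary : Matrix n n ℝ) * star (hA.eigenvectorUnitary : Matrix n n ℝ) = 1 :=
    (Matrix.mem_unitaryGroup_iff).mp (hA.eigenvectorUnitary).2
  have hU' : star (hA.eigenvectorUnitary : Matrix n n ℝ) * (hA.eigenvectorUnitary : Matrix n n ℝ) = 1 :=
    (Matrix.mem_unitaryGroup_iff').mp (hA.eigenvectorUnitary).2
  have hpow : A ^ k = (hA.eigenvectorUnitary : Matrix n n ℝ)
      * (Matrix.diagonal (RCLike.ofReal ∘ hA.eigenvalues)) ^ k
      * star (hA.eigenvectorUnitary : Matrix n n ℝ) := by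
    conv_lhs => rw [hA.spectral_theorem]
    exact my_conj_pow _ _ hU' hU k
  rw [hpow, Matrix.trace_mul_cycle]
  rw [hU', Matrix.one_mul, Matrix.diagonal_pow, Matrix.trace_diagonal]
  simp [RCLike.ofReal]

/-- **The third twisted moment.** For a simple graph `G` on `n ≥ 1` vertices and `S ⊆ V(G)`
with `|S| = σ`, if `λ_1, …, λ_n` are the eigenvalues of the adjacency matrix `A(G_S)` of the
self-loop graph `G_S`, then
`ℳ₃(G_S) = ∑ᵢ |λ_i - σ/n|³
  = 2 ∑_{λ_i ≥ σ/n} λ_i³ - (6σ/n) ∑_{λ_i ≥ σ/n} λ_i² + (4σ²/n²) ∑_{λ_i ≥ σ/n} λ_i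
    - Tr(A(G_S)³) + (3σ/n)·Tr(A(G_S)²) - 2σ³/n² + (σ²/n²)·E(G_S)`,
where `E(G_S) = ∑ᵢ |λ_i - σ/n|` is the energy of `G_S`. -/
theorem twisted_moment_three {V : Type*} [Fintype V] [DecidableEq V]
    (G : SimpleGraph V) [DecidableRel G.Adj] (hn : 1 ≤ Fintype.card V) (S : Finset V)
    (hA : (G.adjMatrix ℝ + Matrix.diagonal fun v => if v ∈ S then (1 : ℝ) else 0).IsHermitian) :
    ∑ i, |hA.eigenvalues i - (S.card : ℝ) / (Fintype.card V : ℝ)| ^ 3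
      = 2 * (∑ i ∈ Finset.univ.filter
              (fun i => (S.card : ℝ) / (Fintype.card V : ℝ) ≤ hA.eigenvalues i),
              hA.eigenvalues i ^ 3)
        - 6 * (S.card : ℝ) / (Fintype.card V : ℝ)
          * (∑ i ∈ Finset.univ.filter
              (fun i => (S.card : ℝ) / (Fintype.card V : ℝ) ≤ hA.eigenvalues i),
              hA.eigenvalues i ^ 2)
        + 4 * (S.card : ℝ) ^ 2 / (Fintype.card V : ℝ) ^ 2
          * (∑ i ∈ Finset.univ.filter
              (fun i => (S.card : ℝ) / (Fintype.card V : ℝ) ≤ hA.eigenvalues i),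
              hA.eigenvalues i)
        - ((G.adjMatrix ℝ + Matrix.diagonal fun v => if v ∈ S then (1 : ℝ) else 0) ^ 3).trace
        + 3 * (S.card : ℝ) / (Fintype.card V : ℝ)
          * ((G.adjMatrix ℝ + Matrix.diagonal fun v => if v ∈ S then (1 : ℝ) else 0) ^ 2).trace
        - 2 * (S.card : ℝ) ^ 3 / (Fintype.card V : ℝ) ^ 2
        + (S.card : ℝ) ^ 2 / (Fintype.card V : ℝ) ^ 2
          * (∑ i, |hA.eigenvalues i - (S.card : ℝ) / (Fintype.card V : ℝ)|) := by
  have hn0 : (Fintype.card V : ℝ) ≠ 0 := by positivity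
  set ev := hA.eigenvalues with hev
  set c : ℝ := (S.card : ℝ) / (Fintype.card V : ℝ) with hc
  set F : Finset V := Finset.univ.filter (fun i => c ≤ ev i) with hF
  -- trace identities
  rw [my_trace_pow_eq_sum hA 3, my_trace_pow_eq_sum hA 2]
  -- trace A = σ
  have hsum : ∑ i, ev i = (S.card : ℝ) := by
    have h1 := my_trace_pow_eq_sum hA 1
    simp only [pow_one] at h1
    rw [← h1, Matrix.trace_add, SimpleGraph.trace_adjMatrix, Matrix.trace_diagonal]
    simp [Finset.sum_ite_mem]
  -- absolute value splits
  have hsplit3 : ∑ i, |ev i - c| ^ 3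
      = 2 * ∑ i ∈ F, (ev i - c) ^ 3 - ∑ i, (ev i - c) ^ 3 := by
    rw [← Finset.sum_filter_add_sum_filter_not Finset.univ (fun i => c ≤ ev i)
        (fun i => |ev i - c| ^ 3),
      ← Finset.sum_filter_add_sum_filter_not Finset.univ (fun i => c ≤ ev i)
        (fun i => (ev i - c) ^ 3)]
    have e1 : ∑ i ∈ F, |ev i - c| ^ 3 = ∑ i ∈ F, (ev i - c) ^ 3 := by
      refine Finset.sum_congr rfl fun i hi => ?_
      rw [abs_of_nonneg (sub_nonneg.2 (Finset.mem_filter.1 hi).2)]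
    have e2 : ∑ i ∈ Finset.univ.filter (fun i => ¬ c ≤ ev i), |ev i - c| ^ 3
        = ∑ i ∈ Finset.univ.filter (fun i => ¬ c ≤ ev i), -((ev i - c) ^ 3) := by
      refine Finset.sum_congr rfl fun i hi => ?_
      rw [abs_of_neg (sub_neg.2 (lt_of_not_ge (Finset.mem_filter.1 hi).2))]
      ring
    rw [e1, e2, Finset.sum_neg_distrib]
    ring
  have hsplit1 : ∑ i, |ev i - c|
      = 2 * ∑ i ∈ F, (ev i - c) - ∑ i, (ev i - c) := by
    rw [← Finset.sum_filter_add_sum_filter_not Finset.univ (fun i => c ≤ ev i)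
        (fun i => |ev i - c|),
      ← Finset.sum_filter_add_sum_filter_not Finset.univ (fun i => c ≤ ev i)
        (fun i => (ev i - c))]
    have e1 : ∑ i ∈ F, |ev i - c| = ∑ i ∈ F, (ev i - c) := by
      refine Finset.sum_congr rfl fun i hi => ?_
      rw [abs_of_nonneg (sub_nonneg.2 (Finset.mem_filter.1 hi).2)]
    have e2 : ∑ i ∈ Finset.univ.filter (fun i => ¬ c ≤ ev i), |ev i - c|
        = ∑ i ∈ Finset.univ.filter (fun i => ¬ c ≤ ev i), -(ev i - c) := by
      refine Finset.sum_congr rfl fun i hi => ?_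
      rw [abs_of_neg (sub_neg.2 (lt_of_not_ge (Finset.mem_filter.1 hi).2))]
    rw [e1, e2, Finset.sum_neg_distrib]
    ring
  -- expansions
  have hexp3 : ∀ (T : Finset V), ∑ i ∈ T, (ev i - c) ^ 3
      = ∑ i ∈ T, ev i ^ 3 - 3 * c * ∑ i ∈ T, ev i ^ 2 + 3 * c ^ 2 * ∑ i ∈ T, ev i
        - (T.card : ℝ) * c ^ 3 := by
    intro T
    rw [Finset.mul_sum, Finset.mul_sum]
    rw [show ((T.card : ℝ) * c ^ 3) = ∑ _i ∈ T, c ^ 3 by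
      rw [Finset.sum_const, nsmul_eq_mul]]
    rw [← Finset.sum_sub_distrib, ← Finset.sum_add_distrib, ← Finset.sum_sub_distrib]
    exact Finset.sum_congr rfl fun i _ => by ring
  have hexp1 : ∀ (T : Finset V), ∑ i ∈ T, (ev i - c)
      = ∑ i ∈ T, ev i - (T.card : ℝ) * c := by
    intro T
    rw [show ((T.card : ℝ) * c) = ∑ _i ∈ T, c by rw [Finset.sum_const, nsmul_eq_mul]]
    exact Finset.sum_sub_distrib _ _
  rw [hsplit3, hsplit1, hexp3, hexp3, hexp1, hexp1, hsum, hc]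
  rw [Finset.card_univ]
  field_simp
  ring
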